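/- arXiv:0712.3736 — 2 statements merged into one kernel-verified Lean document; each statement's English description precedes it below -/
import Mathlib

section
/- Let P be a finite subset of the Euclidean plane ℝ² with P.ncard < 5. Then there exists n ≥ 1 such that 𝒱^[n](P) = ∅. -/
open Set

abbrev Plane : Type := EuclideanSpace ℝ (Fin 2)

/-- The Voronoi cell of a generator `p` for a generating set `P`. -/
def cell (P : Set Plane) (p : Plane) : Set Plane :=
  {x : Plane | ∀ q ∈ P, dist x p ≤ dist x q}

/-- The set of nearest generators of `x` in `P`. -/
def nearest (P : Set Plane) (x : Plane) : Set Plane :=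
  {p ∈ P | ∀ q ∈ P, dist x p ≤ dist x q}

/-- The Voronoi vertex set: points with at least 3 nearest generators. -/
def vtx (P : Set Plane) : Set Plane :=
  {x : Plane | 3 ≤ (nearest P x).encard}

/-- The boundary of a point set: its points on the frontier of its convex hull. -/
def Bd (S : Set Plane) : Set Plane :=
  S ∩ frontier (convexHull ℝ S)

/-- The number of instances of cocircularity. -/
noncomputable def Ic (P : Set Plane) : ℤ :=
  ∑ᶠ x ∈ vtx P, (((nearest P x).ncard : ℤ) - 3)

open RealInnerProductSpace

lemma distsq_expand (a b : Plane) : dist a b ^ 2 = ‖a‖ ^ 2 - 2 * ⟪a, b⟫ + ‖b‖ ^ 2 := by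
  rw [dist_eq_norm]; exact norm_sub_sq_real a b

lemma dist_eq_of_sq_eq {a b c d : Plane} (h : dist a b ^ 2 = dist c d ^ 2) :
    dist a b = dist c d := by
  have h1 : dist a b = Real.sqrt (dist a b ^ 2) := (Real.sqrt_sq dist_nonneg).symm
  rw [h1, h, Real.sqrt_sq dist_nonneg]

lemma unique_center {a b c x y : Plane} (hab : a ≠ b) (hac : a ≠ c) (hbc : b ≠ c)
    (h1 : dist x a = dist x b) (h2 : dist x a = dist x c)
    (h3 : dist y a = dist y b) (h4 : dist y a = dist y c) : x = y := by
  have hco : EuclideanGeometry.Cospherical ({a, b, c} : Set Plane) := by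
    refine ⟨x, dist x a, ?_⟩
    rintro p (rfl | rfl | rfl) <;> rw [dist_comm]
    · rw [← h1]
    · rw [← h2]
  have hind := hco.affineIndependent_of_ne hab hac hbc
  let S2 : Affine.Simplex ℝ Plane 2 := ⟨![a, b, c], hind⟩
  have hspan : affineSpan ℝ (Set.range S2.points) = ⊤ := by
    rw [hind.affineSpan_eq_top_iff_card_eq_finrank_add_one]
    simp [finrank_euclideanSpace_fin]
  have hx : x = S2.circumcenter := by
    refine S2.eq_circumcenter_of_dist_eq (r := dist x a) ?_ ?_
    · rw [hspan]; exact AffineSubspace.mem_top ℝ Plane x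
    · intro i; fin_cases i <;> simp [S2] <;> linarith [dist_comm a x, dist_comm b x, dist_comm c x, h1, h2]
  have hy : y = S2.circumcenter := by
    refine S2.eq_circumcenter_of_dist_eq (r := dist y a) ?_ ?_
    · rw [hspan]; exact AffineSubspace.mem_top ℝ Plane y
    · intro i; fin_cases i <;> simp [S2] <;> linarith [dist_comm a y, dist_comm b y, dist_comm c y, h3, h4]
  rw [hx, hy]

lemma core4 (x0 x1 x2 x3 q0 q1 q2 q3 : Plane) (r0 r1 r2 r3 : ℝ)
    (h01 : dist x0 q1 ^ 2 = r0) (h02 : dist x0 q2 ^ 2 = r0) (h03 : dist x0 q3 ^ 2 = r0)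
    (h10 : dist x1 q0 ^ 2 = r1) (h12 : dist x1 q2 ^ 2 = r1) (h13 : dist x1 q3 ^ 2 = r1)
    (h20 : dist x2 q0 ^ 2 = r2) (h21 : dist x2 q1 ^ 2 = r2) (h23 : dist x2 q3 ^ 2 = r2)
    (h30 : dist x3 q0 ^ 2 = r3) (h31 : dist x3 q1 ^ 2 = r3) (h32 : dist x3 q2 ^ 2 = r3)
    (g0 : r0 < dist x0 q0 ^ 2) (g1 : r1 < dist x1 q1 ^ 2)
    (g2 : r2 < dist x2 q2 ^ 2) (g3 : r3 < dist x3 q3 ^ 2)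
    (hq12 : q1 ≠ q2) (hq13 : q1 ≠ q3) (hq23 : q2 ≠ q3)
    (hq02 : q0 ≠ q2) (hq03 : q0 ≠ q3) : x0 = x1 := by
  obtain ⟨u0, hu0, hu0p⟩ : ∃ u : ℝ, u * (dist x0 q0 ^ 2 - r0) = 1 ∧ 0 < u :=
    ⟨_, inv_mul_cancel₀ (sub_pos.mpr g0).ne', inv_pos.mpr (sub_pos.mpr g0)⟩
  obtain ⟨u1, hu1, hu1p⟩ : ∃ u : ℝ, u * (dist x1 q1 ^ 2 - r1) = 1 ∧ 0 < u :=
    ⟨_, inv_mul_cancel₀ (sub_pos.mpr g1).ne', inv_pos.mpr (sub_pos.mpr g1)⟩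
  obtain ⟨u2, hu2, hu2p⟩ : ∃ u : ℝ, u * (dist x2 q2 ^ 2 - r2) = 1 ∧ 0 < u :=
    ⟨_, inv_mul_cancel₀ (sub_pos.mpr g2).ne', inv_pos.mpr (sub_pos.mpr g2)⟩
  obtain ⟨u3, hu3, hu3p⟩ : ∃ u : ℝ, u * (dist x3 q3 ^ 2 - r3) = 1 ∧ 0 < u :=
    ⟨_, inv_mul_cancel₀ (sub_pos.mpr g3).ne', inv_pos.mpr (sub_pos.mpr g3)⟩
  obtain ⟨σ, hσ, hσp⟩ : ∃ σ : ℝ, σ * (u0 + u1 + u2 + u3) = 1 ∧ 0 < σ := by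
    have hs : 0 < u0 + u1 + u2 + u3 := by linarith
    exact ⟨_, inv_mul_cancel₀ hs.ne', inv_pos.mpr hs⟩
  set o : Plane := σ • (u0 • x0 + u1 • x1 + u2 • x2 + u3 • x3) with ho_def
  have hexp : ∀ A B : Plane, ‖A‖ ^ 2 - 2 * ⟪A, B⟫ + ‖B‖ ^ 2 = dist B A ^ 2 := by
    intro A B; rw [dist_comm, distsq_expand]
  have hinner : ∀ A : Plane, ⟪A, o⟫ =
      σ * (u0 * ⟪A, x0⟫ + u1 * ⟪A, x1⟫ + u2 * ⟪A, x2⟫ + u3 * ⟪A, x3⟫) := by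
    intro A
    rw [ho_def]
    simp [inner_add_right, real_inner_smul_right]
    ring
  have hE0 : u0 * (‖q0‖ ^ 2 - 2 * ⟪q0, x0⟫ + ‖x0‖ ^ 2 - r0)
      + u1 * (‖q0‖ ^ 2 - 2 * ⟪q0, x1⟫ + ‖x1‖ ^ 2 - r1)
      + u2 * (‖q0‖ ^ 2 - 2 * ⟪q0, x2⟫ + ‖x2‖ ^ 2 - r2)
      + u3 * (‖q0‖ ^ 2 - 2 * ⟪q0, x3⟫ + ‖x3‖ ^ 2 - r3) = 1 := by
    linear_combination u1 * ((hexp q0 x1).trans h10) + u2 * ((hexp q0 x2).trans h20)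
      + u3 * ((hexp q0 x3).trans h30) + u0 * hexp q0 x0 + hu0
  have hE1 : u0 * (‖q1‖ ^ 2 - 2 * ⟪q1, x0⟫ + ‖x0‖ ^ 2 - r0)
      + u1 * (‖q1‖ ^ 2 - 2 * ⟪q1, x1⟫ + ‖x1‖ ^ 2 - r1)
      + u2 * (‖q1‖ ^ 2 - 2 * ⟪q1, x2⟫ + ‖x2‖ ^ 2 - r2)
      + u3 * (‖q1‖ ^ 2 - 2 * ⟪q1, x3⟫ + ‖x3‖ ^ 2 - r3) = 1 := by
    linear_combination u0 * ((hexp q1 x0).trans h01) + u2 * ((hexp q1 x2).trans h21)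
      + u3 * ((hexp q1 x3).trans h31) + u1 * hexp q1 x1 + hu1
  have hE2 : u0 * (‖q2‖ ^ 2 - 2 * ⟪q2, x0⟫ + ‖x0‖ ^ 2 - r0)
      + u1 * (‖q2‖ ^ 2 - 2 * ⟪q2, x1⟫ + ‖x1‖ ^ 2 - r1)
      + u2 * (‖q2‖ ^ 2 - 2 * ⟪q2, x2⟫ + ‖x2‖ ^ 2 - r2)
      + u3 * (‖q2‖ ^ 2 - 2 * ⟪q2, x3⟫ + ‖x3‖ ^ 2 - r3) = 1 := by
    linear_combination u0 * ((hexp q2 x0).trans h02) + u1 * ((hexp q2 x1).trans h12)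
      + u3 * ((hexp q2 x3).trans h32) + u2 * hexp q2 x2 + hu2
  have hE3 : u0 * (‖q3‖ ^ 2 - 2 * ⟪q3, x0⟫ + ‖x0‖ ^ 2 - r0)
      + u1 * (‖q3‖ ^ 2 - 2 * ⟪q3, x1⟫ + ‖x1‖ ^ 2 - r1)
      + u2 * (‖q3‖ ^ 2 - 2 * ⟪q3, x2⟫ + ‖x2‖ ^ 2 - r2)
      + u3 * (‖q3‖ ^ 2 - 2 * ⟪q3, x3⟫ + ‖x3‖ ^ 2 - r3) = 1 := by
    linear_combination u0 * ((hexp q3 x0).trans h03) + u1 * ((hexp q3 x1).trans h13)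
      + u2 * ((hexp q3 x2).trans h23) + u3 * hexp q3 x3 + hu3
  have key01 : dist q0 o ^ 2 = dist q1 o ^ 2 := by
    rw [distsq_expand, distsq_expand, hinner q0, hinner q1]
    linear_combination σ * hE0 - σ * hE1 - (‖q0‖ ^ 2 - ‖q1‖ ^ 2) * hσ
  have key02 : dist q0 o ^ 2 = dist q2 o ^ 2 := by
    rw [distsq_expand, distsq_expand, hinner q0, hinner q2]
    linear_combination σ * hE0 - σ * hE2 - (‖q0‖ ^ 2 - ‖q2‖ ^ 2) * hσ
  have key03 : dist q0 o ^ 2 = dist q3 o ^ 2 := by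
    rw [distsq_expand, distsq_expand, hinner q0, hinner q3]
    linear_combination σ * hE0 - σ * hE3 - (‖q0‖ ^ 2 - ‖q3‖ ^ 2) * hσ
  have ho01 := dist_eq_of_sq_eq key01
  have ho02 := dist_eq_of_sq_eq key02
  have ho03 := dist_eq_of_sq_eq key03
  have hx0 : x0 = o := by
    refine unique_center (a := q1) hq12 hq13 hq23 ?_ ?_ ?_ ?_
    · exact dist_eq_of_sq_eq (h01.trans h02.symm)
    · exact dist_eq_of_sq_eq (h01.trans h03.symm)
    · rw [dist_comm o q1, dist_comm o q2, ← ho01, ← ho02]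
    · rw [dist_comm o q1, dist_comm o q3, ← ho01, ← ho03]
  have hx1 : x1 = o := by
    refine unique_center (a := q0) hq02 hq03 hq23 ?_ ?_ ?_ ?_
    · exact dist_eq_of_sq_eq (h10.trans h12.symm)
    · exact dist_eq_of_sq_eq (h10.trans h13.symm)
    · rw [dist_comm o q0, dist_comm o q2, ← ho02]
    · rw [dist_comm o q0, dist_comm o q3, ← ho03]
  rw [hx0, hx1]

lemma nearest_subset (P : Set Plane) (x : Plane) : nearest P x ⊆ P := fun _ hp => hp.1

lemma dist_eq_of_mem_nearest {P : Set Plane} {x a b : Plane}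
    (ha : a ∈ nearest P x) (hb : b ∈ nearest P x) : dist x a = dist x b :=
  le_antisymm (ha.2 b hb.1) (hb.2 a ha.1)

lemma vtx_eq_of_nearest_subset {S : Set Plane} {x y : Plane} (hx : x ∈ vtx S)
    (hss : nearest S x ⊆ nearest S y) : x = y := by
  obtain ⟨t, hts, ht⟩ := Set.exists_subset_encard_eq (hx : (3 : ℕ∞) ≤ (nearest S x).encard)
  obtain ⟨a, b, c, hab, hac, hbc, rfl⟩ := Set.encard_eq_three.mp ht
  have ha : a ∈ nearest S x := hts (by simp)
  have hb : b ∈ nearest S x := hts (by simp)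
  have hc : c ∈ nearest S x := hts (by simp)
  exact unique_center hab hac hbc (dist_eq_of_mem_nearest ha hb)
    (dist_eq_of_mem_nearest ha hc) (dist_eq_of_mem_nearest (hss ha) (hss hb))
    (dist_eq_of_mem_nearest (hss ha) (hss hc))

lemma B2 (S : Set Plane) (h : S.encard ≤ 2) : vtx S = ∅ := by
  rw [Set.eq_empty_iff_forall_notMem]
  intro x hx
  have h3 : (3 : ℕ∞) ≤ S.encard :=
    le_trans hx (Set.encard_le_encard (nearest_subset S x))
  exact absurd (le_trans h3 h) (by norm_num)

lemma B3 (S : Set Plane) (h : S.encard ≤ 3) : (vtx S).encard ≤ 1 := by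
  rw [Set.encard_le_one_iff]
  intro x y hx hy
  have hSfin : S.Finite := Set.encard_lt_top_iff.mp (lt_of_le_of_lt h (lt_top_iff_ne_top.mpr (by decide)))
  have hex : nearest S x = S :=
    hSfin.eq_of_subset_of_encard_le' (nearest_subset S x) (le_trans h hx)
  have hey : nearest S y = S :=
    hSfin.eq_of_subset_of_encard_le' (nearest_subset S y) (le_trans h hy)
  exact vtx_eq_of_nearest_subset hx (by rw [hex, hey])

lemma missing (S : Set Plane) (hS : S.encard ≤ 4) {x : Plane} (hx : x ∈ vtx S)
    (hne : nearest S x ≠ S) : ∃ m, S \ nearest S x = {m} := by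
  have hsub := nearest_subset S x
  have h3 : (3 : ℕ∞) ≤ (nearest S x).encard := hx
  have hd : (S \ nearest S x).encard + (nearest S x).encard = S.encard :=
    Set.encard_diff_add_encard_of_subset hsub
  have hnonempty : (S \ nearest S x).Nonempty := by
    rw [Set.nonempty_iff_ne_empty]
    intro he
    exact hne (le_antisymm hsub (Set.diff_eq_empty.mp he))
  have hle1 : (S \ nearest S x).encard ≤ 1 := by
    by_contra hgt
    rw [not_le] at hgt
    have h2 : (2 : ℕ∞) ≤ (S \ nearest S x).encard := Order.add_one_le_of_lt hgt
    have : (2 : ℕ∞) + 3 ≤ 4 := le_trans (le_trans (add_le_add h2 h3) (le_of_eq hd)) hS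
    exact absurd this (by decide)
  have h1 : (S \ nearest S x).encard = 1 :=
    le_antisymm hle1 (Set.one_le_encard_iff_nonempty.mpr hnonempty)
  exact Set.encard_eq_one.mp h1

lemma same_missing {S : Set Plane} {z w m : Plane} (hz : z ∈ vtx S)
    (hma : S \ nearest S z = {m}) (hmb : S \ nearest S w = {m}) : z = w := by
  have h1 : nearest S z = S \ {m} := by
    rw [← hma, Set.diff_diff_cancel_left (nearest_subset S z)]
  have h2 : nearest S w = S \ {m} := by
    rw [← hmb, Set.diff_diff_cancel_left (nearest_subset S w)]
  exact vtx_eq_of_nearest_subset hz (by rw [h1, h2])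

lemma mem_nearest_of_ne_missing {S : Set Plane} {z mz p : Plane}
    (hmz : S \ nearest S z = {mz}) (hpS : p ∈ S) (hpm : p ≠ mz) : p ∈ nearest S z := by
  by_contra hp
  have : p ∈ S \ nearest S z := ⟨hpS, hp⟩
  rw [hmz] at this
  exact hpm this

lemma B4 (S : Set Plane) (h : S.encard ≤ 4) : (vtx S).encard ≤ 3 := by
  by_contra hcon
  rw [not_le] at hcon
  have h4 : (4 : ℕ∞) ≤ (vtx S).encard := Order.add_one_le_of_lt hcon
  obtain ⟨t, hts, ht4⟩ := Set.exists_subset_encard_eq h4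
  have htne : t.Nonempty := by
    rw [← Set.encard_ne_zero, ht4]; decide
  obtain ⟨x0, hx0t⟩ := htne
  have ht3 : (t \ {x0}).encard = 3 := by
    rw [Set.encard_diff_singleton_of_mem hx0t, ht4]; decide
  obtain ⟨x1, x2, x3, h12, h13, h23, hdd⟩ := Set.encard_eq_three.mp ht3
  have hm1 : x1 ∈ t \ {x0} := by rw [hdd]; simp
  have hm2 : x2 ∈ t \ {x0} := by rw [hdd]; simp
  have hm3 : x3 ∈ t \ {x0} := by rw [hdd]; simp
  have h10 : x1 ≠ x0 := by simpa using hm1.2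
  have h20 : x2 ≠ x0 := by simpa using hm2.2
  have h30 : x3 ≠ x0 := by simpa using hm3.2
  have hv0 : x0 ∈ vtx S := hts hx0t
  have hv1 : x1 ∈ vtx S := hts hm1.1
  have hv2 : x2 ∈ vtx S := hts hm2.1
  have hv3 : x3 ∈ vtx S := hts hm3.1
  have hneS : ∀ z w : Plane, z ∈ vtx S → w ∈ vtx S → w ≠ z → nearest S z ≠ S := by
    intro z w hz hw hwz hzS
    exact hwz (vtx_eq_of_nearest_subset hw (by rw [hzS]; exact nearest_subset S w))
  obtain ⟨m0, hmm0⟩ := missing S h hv0 (hneS x0 x1 hv0 hv1 h10)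
  obtain ⟨m1, hmm1⟩ := missing S h hv1 (hneS x1 x0 hv1 hv0 h10.symm)
  obtain ⟨m2, hmm2⟩ := missing S h hv2 (hneS x2 x0 hv2 hv0 h20.symm)
  obtain ⟨m3, hmm3⟩ := missing S h hv3 (hneS x3 x0 hv3 hv0 h30.symm)
  -- pairwise distinctness of the missing points
  have hne01 : m0 ≠ m1 := fun he => h10 (same_missing hv0 hmm0 (he ▸ hmm1)).symm
  have hne02 : m0 ≠ m2 := fun he => h20 (same_missing hv0 hmm0 (he ▸ hmm2)).symm
  have hne03 : m0 ≠ m3 := fun he => h30 (same_missing hv0 hmm0 (he ▸ hmm3)).symm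
  have hne12 : m1 ≠ m2 := fun he => h12 (same_missing hv1 hmm1 (he ▸ hmm2))
  have hne13 : m1 ≠ m3 := fun he => h13 (same_missing hv1 hmm1 (he ▸ hmm3))
  have hne23 : m2 ≠ m3 := fun he => h23 (same_missing hv2 hmm2 (he ▸ hmm3))
  -- membership facts
  have hmS : ∀ {z mz : Plane}, S \ nearest S z = {mz} → mz ∈ S ∧ mz ∉ nearest S z := by
    intro z mz hmz
    have : mz ∈ S \ nearest S z := by rw [hmz]; rfl
    exact ⟨this.1, this.2⟩
  have n01 : m1 ∈ nearest S x0 := mem_nearest_of_ne_missing hmm0 (hmS hmm1).1 hne01.symm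
  have n02 : m2 ∈ nearest S x0 := mem_nearest_of_ne_missing hmm0 (hmS hmm2).1 hne02.symm
  have n03 : m3 ∈ nearest S x0 := mem_nearest_of_ne_missing hmm0 (hmS hmm3).1 hne03.symm
  have n10 : m0 ∈ nearest S x1 := mem_nearest_of_ne_missing hmm1 (hmS hmm0).1 hne01
  have n12 : m2 ∈ nearest S x1 := mem_nearest_of_ne_missing hmm1 (hmS hmm2).1 hne12.symm
  have n13 : m3 ∈ nearest S x1 := mem_nearest_of_ne_missing hmm1 (hmS hmm3).1 hne13.symm
  have n20 : m0 ∈ nearest S x2 := mem_nearest_of_ne_missing hmm2 (hmS hmm0).1 hne02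
  have n21 : m1 ∈ nearest S x2 := mem_nearest_of_ne_missing hmm2 (hmS hmm1).1 hne12
  have n23 : m3 ∈ nearest S x2 := mem_nearest_of_ne_missing hmm2 (hmS hmm3).1 hne23.symm
  have n30 : m0 ∈ nearest S x3 := mem_nearest_of_ne_missing hmm3 (hmS hmm0).1 hne03
  have n31 : m1 ∈ nearest S x3 := mem_nearest_of_ne_missing hmm3 (hmS hmm1).1 hne13
  have n32 : m2 ∈ nearest S x3 := mem_nearest_of_ne_missing hmm3 (hmS hmm2).1 hne23
  -- strict inequality for the missing point
  have hstrict : ∀ {z mz w : Plane}, S \ nearest S z = {mz} → w ∈ nearest S z →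
      dist z w ^ 2 < dist z mz ^ 2 := by
    intro z mz w hmz hw
    have hmzS : mz ∈ S ∧ mz ∉ nearest S z := hmS hmz
    have : ¬ (mz ∈ S ∧ ∀ q ∈ S, dist z mz ≤ dist z q) := hmzS.2
    push_neg at this
    obtain ⟨p, hpS, hpd⟩ := this hmzS.1
    have hle : dist z w ≤ dist z p := hw.2 p hpS
    have hlt : dist z w < dist z mz := lt_of_le_of_lt hle hpd
    exact pow_lt_pow_left₀ hlt dist_nonneg (by norm_num)
  have := core4 x0 x1 x2 x3 m0 m1 m2 m3
    (dist x0 m1 ^ 2) (dist x1 m0 ^ 2) (dist x2 m0 ^ 2) (dist x3 m0 ^ 2)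
    rfl (by rw [dist_eq_of_mem_nearest n02 n01]) (by rw [dist_eq_of_mem_nearest n03 n01])
    rfl (by rw [dist_eq_of_mem_nearest n12 n10]) (by rw [dist_eq_of_mem_nearest n13 n10])
    rfl (by rw [dist_eq_of_mem_nearest n21 n20]) (by rw [dist_eq_of_mem_nearest n23 n20])
    rfl (by rw [dist_eq_of_mem_nearest n31 n30]) (by rw [dist_eq_of_mem_nearest n32 n30])
    (hstrict hmm0 n01) (hstrict hmm1 n10) (hstrict hmm2 n20) (hstrict hmm3 n30)
    hne12 hne13 hne23 hne02 hne03
  exact h10 this.symm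

theorem small_sets_die (P : Set Plane) (hP : P.Finite) (h : P.ncard < 5) :
    ∃ n : ℕ, 1 ≤ n ∧ vtx^[n] P = ∅ := by
  have hPe : P.encard ≤ 4 := by
    have h1 : P.encard = (P.ncard : ℕ∞) := by
      rw [Set.Finite.encard_eq_coe_toFinset_card hP, Set.ncard_eq_toFinset_card P hP]
    rw [h1]
    exact_mod_cast Nat.lt_succ_iff.mp h
  refine ⟨3, by norm_num, ?_⟩
  have h1 := B4 P hPe
  have h2 := B3 (vtx P) h1
  have h3 := B2 (vtx (vtx P)) (le_trans h2 (by decide))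
  show vtx^[3] P = ∅
  rw [show (3 : ℕ) = 2 + 1 from rfl, Function.iterate_succ_apply',
      show (2 : ℕ) = 1 + 1 from rfl, Function.iterate_succ_apply', Function.iterate_one]
  exact h3
end

section
/- Let P ⊆ ℝ² be the integer square lattice, P = {x ∈ ℝ² : x 0 ∈ range (Int.cast : ℤ → ℝ) ∧ x 1 ∈ range (Int.cast : ℤ → ℝ)}. Then the Voronoi vertex set of P is the shifted lattice: 𝒱(P) = {x ∈ ℝ² : x 0 − 1/2 ∈ range (Int.cast : ℤ → ℝ) ∧ x 1 − 1/2 ∈ range (Int.cast : ℤ → ℝ)}. In particular, the square lattice is a fixed point of Voronoi iteration up to translation. -/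
open Set

noncomputable def pt (a b : ℝ) : Plane := (WithLp.equiv 2 (Fin 2 → ℝ)).symm ![a, b]

@[simp] lemma pt0 (a b : ℝ) : pt a b 0 = a := rfl
@[simp] lemma pt1 (a b : ℝ) : pt a b 1 = b := rfl

lemma plane_ext {p q : Plane} (h0 : p 0 = q 0) (h1 : p 1 = q 1) : p = q := by
  ext i; fin_cases i <;> assumption

lemma dist_le_iff (x p q : Plane) :
    dist x p ≤ dist x q ↔
      (x 0 - p 0)^2 + (x 1 - p 1)^2 ≤ (x 0 - q 0)^2 + (x 1 - q 1)^2 := by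
  rw [EuclideanSpace.dist_eq, EuclideanSpace.dist_eq,
    Real.sqrt_le_sqrt_iff (by positivity)]
  simp [Fin.sum_univ_two, Real.dist_eq, sq_abs]

lemma half_le (a m : ℤ) : (1:ℝ)/4 ≤ ((a:ℝ) + 1/2 - m)^2 := by
  have h : 0 ≤ (a - m) * (a - m + 1) := by
    rcases le_or_gt 0 (a - m) with h | h
    · exact mul_nonneg h (by omega)
    · nlinarith [mul_nonneg (by omega : (0:ℤ) ≤ m - a) (by omega : (0:ℤ) ≤ m - a - 1)]
  have h' : (0:ℝ) ≤ ((a:ℝ) - m) * ((a:ℝ) - m + 1) := by exact_mod_cast h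
  nlinarith

lemma two_t {t : ℝ} {n m : ℤ}
    (hn : ∀ k : ℤ, (t - n)^2 ≤ (t - k)^2) (hm : ∀ k : ℤ, (t - m)^2 ≤ (t - k)^2)
    (hne : n ≠ m) : 2 * t = n + m := by
  have h : (t - (n:ℝ))^2 = (t - m)^2 := le_antisymm (hn m) (hm n)
  have hnm : (n:ℝ) ≠ m := by exact_mod_cast hne
  have h3 : ((m:ℝ) - n) * (2 * t - n - m) = 0 := by linear_combination h
  rcases mul_eq_zero.1 h3 with h4 | h4
  · exact absurd (by linarith) hnm
  · linarith

lemma half_of_two {t : ℝ} {n m : ℤ}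
    (hn : ∀ k : ℤ, (t - n)^2 ≤ (t - k)^2) (hm : ∀ k : ℤ, (t - m)^2 ≤ (t - k)^2)
    (hne : n ≠ m) : t - 1/2 ∈ Set.range (Int.cast : ℤ → ℝ) := by
  have h2t := two_t hn hm hne
  rcases Int.even_or_odd (n + m) with ⟨k, hk⟩ | ⟨k, hk⟩
  · exfalso
    have ht : t = (k : ℝ) := by
      have : ((n:ℝ) + m) = 2 * k := by exact_mod_cast (by omega : n + m = 2 * k)
      linarith
    have h1 := hn k
    have h2 := hm k
    rw [ht] at h1 h2
    simp at h1 h2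
    have : (n:ℝ) = m := by nlinarith
    exact hne (by exact_mod_cast this)
  · refine ⟨k, ?_⟩
    have : ((n:ℝ) + m) = 2 * k + 1 := by exact_mod_cast hk
    linarith

lemma coord_min {x p : Plane}
    (hp : p ∈ nearest {x : Plane | x 0 ∈ Set.range (Int.cast : ℤ → ℝ) ∧
        x 1 ∈ Set.range (Int.cast : ℤ → ℝ)} x) :
    ∃ a b : ℤ, p 0 = a ∧ p 1 = b ∧
      (∀ m : ℤ, (x 0 - a)^2 ≤ (x 0 - m)^2) ∧
      (∀ m : ℤ, (x 1 - b)^2 ≤ (x 1 - m)^2) := by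
  obtain ⟨⟨⟨a, ha⟩, ⟨b, hb⟩⟩, hmin⟩ := hp
  refine ⟨a, b, ha.symm, hb.symm, ?_, ?_⟩
  · intro m
    have := hmin (pt m b) ⟨⟨m, rfl⟩, ⟨b, rfl⟩⟩
    rw [dist_le_iff] at this
    simp only [pt0, pt1] at this
    rw [← ha, ← hb] at this
    nlinarith [this]
  · intro m
    have := hmin (pt a m) ⟨⟨a, rfl⟩, ⟨m, rfl⟩⟩
    rw [dist_le_iff] at this
    simp only [pt0, pt1] at this
    rw [← ha, ← hb] at this
    nlinarith [this]

theorem square_lattice_vtx_aux :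
    {x : Plane | 3 ≤ (nearest {x : Plane | x 0 ∈ Set.range (Int.cast : ℤ → ℝ) ∧
        x 1 ∈ Set.range (Int.cast : ℤ → ℝ)} x).encard} =
      {x : Plane | x 0 - 1/2 ∈ Set.range (Int.cast : ℤ → ℝ) ∧
        x 1 - 1/2 ∈ Set.range (Int.cast : ℤ → ℝ)} := by
  ext x
  simp only [mem_setOf_eq]
  constructor
  · intro h
    obtain ⟨t, hts, htc⟩ := Set.exists_subset_encard_eq h
    rw [Set.encard_eq_three] at htc
    obtain ⟨p, q, r, hpq, hpr, hqr, rfl⟩ := htc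
    have hpm : p ∈ ({p, q, r} : Set Plane) := by simp
    have hqm : q ∈ ({p, q, r} : Set Plane) := by simp
    have hrm : r ∈ ({p, q, r} : Set Plane) := by simp
    obtain ⟨ap, bp, hp0, hp1, hmp0, hmp1⟩ := coord_min (hts hpm)
    obtain ⟨aq, bq, hq0, hq1, hmq0, hmq1⟩ := coord_min (hts hqm)
    obtain ⟨ar, br, hr0, hr1, hmr0, hmr1⟩ := coord_min (hts hrm)
    constructor
    · by_cases h1 : ap = aq
      · by_cases h2 : ap = ar
        · exfalso
          have hbpq : bp ≠ bq := fun hb =>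
            hpq (plane_ext (by rw [hp0, hq0, h1]) (by rw [hp1, hq1, hb]))
          have hbpr : bp ≠ br := fun hb =>
            hpr (plane_ext (by rw [hp0, hr0, h2]) (by rw [hp1, hr1, hb]))
          have hbqr : bq ≠ br := fun hb =>
            hqr (plane_ext (by rw [hq0, hr0, ← h1, h2]) (by rw [hq1, hr1, hb]))
          have e1 := two_t hmp1 hmq1 hbpq
          have e2 := two_t hmp1 hmr1 hbpr
          have : (bq : ℝ) = br := by linarith
          exact hbqr (by exact_mod_cast this)
        · exact half_of_two hmp0 hmr0 h2
      · exact half_of_two hmp0 hmq0 h1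
    · by_cases h1 : bp = bq
      · by_cases h2 : bp = br
        · exfalso
          have hapq : ap ≠ aq := fun hb =>
            hpq (plane_ext (by rw [hp0, hq0, hb]) (by rw [hp1, hq1, h1]))
          have hapr : ap ≠ ar := fun hb =>
            hpr (plane_ext (by rw [hp0, hr0, hb]) (by rw [hp1, hr1, h2]))
          have haqr : aq ≠ ar := fun hb =>
            hqr (plane_ext (by rw [hq0, hr0, hb]) (by rw [hq1, hr1, ← h1, h2]))
          have e1 := two_t hmp0 hmq0 hapq
          have e2 := two_t hmp0 hmr0 hapr
          have : (aq : ℝ) = ar := by linarith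
          exact haqr (by exact_mod_cast this)
        · exact half_of_two hmp1 hmr1 h2
      · exact half_of_two hmp1 hmq1 h1
  · rintro ⟨⟨a, ha⟩, ⟨b, hb⟩⟩
    have hx0 : x 0 = (a : ℝ) + 1/2 := by linarith
    have hx1 : x 1 = (b : ℝ) + 1/2 := by linarith
    have key : ∀ c d : ℤ, (x 0 - c)^2 = 1/4 → (x 1 - d)^2 = 1/4 →
        pt c d ∈ nearest {x : Plane | x 0 ∈ Set.range (Int.cast : ℤ → ℝ) ∧
          x 1 ∈ Set.range (Int.cast : ℤ → ℝ)} x := by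
      intro c d h1 h2
      refine ⟨⟨⟨c, rfl⟩, ⟨d, rfl⟩⟩, ?_⟩
      rintro qq ⟨⟨m, hm⟩, ⟨k, hk⟩⟩
      rw [dist_le_iff]
      simp only [pt0, pt1]
      rw [← hm, ← hk]
      have g1 : (1:ℝ)/4 ≤ (x 0 - m)^2 := by rw [hx0]; exact half_le a m
      have g2 : (1:ℝ)/4 ≤ (x 1 - k)^2 := by rw [hx1]; exact half_le b k
      linarith
    have k1 := key a b (by rw [hx0]; norm_num) (by rw [hx1]; norm_num)
    have k2 := key (a+1) b (by rw [hx0]; push_cast; ring_nf)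
      (by rw [hx1]; norm_num)
    have k3 := key a (b+1) (by rw [hx0]; norm_num)
      (by rw [hx1]; push_cast; ring_nf)
    push_cast at k2 k3
    have hd12 : pt (a:ℝ) b ≠ pt ((a:ℝ)+1) b := by
      intro h
      have := congrArg (fun f : Plane => f 0) h
      simp at this
    have hd13 : pt (a:ℝ) b ≠ pt (a:ℝ) ((b:ℝ)+1) := by
      intro h
      have := congrArg (fun f : Plane => f 1) h
      simp at this
    have hd23 : pt ((a:ℝ)+1) b ≠ pt (a:ℝ) ((b:ℝ)+1) := by
      intro h
      have := congrArg (fun f : Plane => f 0) h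
      simp at this
    have hsub : ({pt (a:ℝ) b, pt ((a:ℝ)+1) b, pt (a:ℝ) ((b:ℝ)+1)} : Set Plane) ⊆
        nearest {x : Plane | x 0 ∈ Set.range (Int.cast : ℤ → ℝ) ∧
          x 1 ∈ Set.range (Int.cast : ℤ → ℝ)} x := by
      rintro y (rfl | rfl | rfl) <;> assumption
    have e3 : ({pt (a:ℝ) b, pt ((a:ℝ)+1) b, pt (a:ℝ) ((b:ℝ)+1)} : Set Plane).encard = 3 := by
      rw [Set.encard_insert_of_notMem (by simp [hd12, hd13]),
        Set.encard_pair hd23]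
      rfl
    calc (3 : ℕ∞) = _ := e3.symm
      _ ≤ _ := Set.encard_le_encard hsub


theorem square_lattice_vtx :
    vtx {x : Plane | x 0 ∈ Set.range (Int.cast : ℤ → ℝ) ∧
        x 1 ∈ Set.range (Int.cast : ℤ → ℝ)} =
      {x : Plane | x 0 - 1/2 ∈ Set.range (Int.cast : ℤ → ℝ) ∧
        x 1 - 1/2 ∈ Set.range (Int.cast : ℤ → ℝ)} :=
  square_lattice_vtx_aux
end
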